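/- For g ≥ 1, the rational polynomial R_g(X) = Σ over chains 0 = g₀ < g₁ < ... < g_r = g of Π_{i=1}^{r} (1/(2g_i)) · C(X+1-2g_{i-1}, 2(g_i-g_{i-1})+1) (where C(X,k) = X(X-1)...(X-k+1)/k!) is divisible by (X+1)X(X-1)···(X+1-2g), i.e. by Π_{j=0}^{2g} (X+1-j). -/

import Mathlib

open Polynomial

/-- Polynomial binomial coefficient `C(P, k) = P(P-1)⋯(P-k+1)/k!`. -/
noncomputable def pchoose (P : ℚ[X]) (k : ℕ) : ℚ[X] :=
  Polynomial.C ((Nat.factorial k : ℚ))⁻¹ * ∏ i ∈ Finset.range k, (P - (i : ℚ[X]))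

/-- The polynomial `Π_{i=1}^r C(X+1-2g_{i-1}, 2(gᵢ-g_{i-1})+1)/(2gᵢ)`
associated to the chain `0 = g₀ < g₁ < ⋯ < g_r = g` whose intermediate
entries form the set `S ⊆ (0, g)`. -/
noncomputable def chainProdP (g : ℕ) (S : Finset ℕ) : ℚ[X] :=
  let l : List ℕ := 0 :: Finset.sort (insert g S) (· ≤ ·)
  ((l.zip l.tail).map (fun ab =>
      Polynomial.C ((2 * (ab.2 : ℚ))⁻¹) *
        pchoose (Polynomial.X + 1 - 2 * (ab.1 : ℚ[X])) (2 * (ab.2 - ab.1) + 1))).prod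

/-- The rational polynomial
`R_g(X) = Σ_{0=g₀<g₁<⋯<g_r=g} Π_{i=1}^r (1/(2gᵢ))·C(X+1-2g_{i-1}, 2(gᵢ-g_{i-1})+1)`. -/
noncomputable def RchainP (g : ℕ) : ℚ[X] :=
  if g = 0 then 1 else ∑ S ∈ (Finset.Ioo 0 g).powerset, chainProdP g S


noncomputable def Ffac (a b : ℕ) : ℚ[X] :=
  Polynomial.C ((2 * (b : ℚ))⁻¹) *
    pchoose (Polynomial.X + 1 - 2 * (a : ℚ[X])) (2 * (b - a) + 1)

lemma sort_insert_max {a : ℕ} {s : Finset ℕ} (h1 : ∀ b ∈ s, b < a) :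
    Finset.sort (insert a s) (· ≤ ·) = Finset.sort s (· ≤ ·) ++ [a] := by
  have ha : a ∉ s := fun h => lt_irrefl a (h1 a h)
  refine (fun hp h1 h2 => List.Perm.eq_of_pairwise' (r := (· ≤ · : ℕ → ℕ → Prop))
    (l₂ := Finset.sort s (· ≤ ·) ++ [a]) h1 h2 hp) ?_ ?_ ?_
  · rw [← Multiset.coe_eq_coe]
    rw [Finset.sort_eq, ← Multiset.coe_add, Finset.sort_eq, Finset.insert_val_of_notMem ha]
    rw [← Multiset.singleton_add, add_comm]
    rfl
  · exact Finset.pairwise_sort _ _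
  · rw [List.pairwise_append]
    refine ⟨Finset.pairwise_sort _ _, List.pairwise_singleton _ a, ?_⟩
    intro b hb c hc
    simp at hc; subst hc
    exact (h1 b ((Finset.mem_sort (α := ℕ) (· ≤ ·)).mp hb)).le

lemma zip_tail_append (l : List ℕ) (x a : ℕ) :
    ((x :: l) ++ [a]).zip (l ++ [a]) = (x :: l).zip l ++ [(l.getLastD x, a)] := by
  induction l generalizing x with
  | nil => simp
  | cons y t ih =>
    simp only [List.cons_append, List.zip_cons_cons]
    have := ih y
    simp only [List.cons_append] at this
    rw [this]
    cases t with
    | nil => simp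
    | cons z u =>
      obtain ⟨w, hw⟩ := Option.isSome_iff_exists.mp
        (List.getLast?_isSome.mpr (List.cons_ne_nil z u))
      simp [List.getLastD, hw]

lemma chainProdP_empty (g : ℕ) : chainProdP g ∅ = Ffac 0 g := by
  simp [chainProdP, Ffac]

lemma chainProdP_insert {g k : ℕ} {S' : Finset ℕ} (hk0 : 0 < k) (hkg : k < g)
    (hS' : S' ⊆ Finset.Ioo 0 k) :
    chainProdP g (insert k S') = chainProdP k S' * Ffac k g := by
  have hlt : ∀ b ∈ S', b < k := fun b hb => (Finset.mem_Ioo.mp (hS' hb)).2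
  have hltg : ∀ b ∈ insert k S', b < g := by
    intro b hb
    rcases Finset.mem_insert.mp hb with rfl | hb
    · exact hkg
    · exact (hlt b hb).trans hkg
  have h1 : Finset.sort (insert g (insert k S')) (· ≤ ·)
      = Finset.sort (insert k S') (· ≤ ·) ++ [g] := sort_insert_max hltg
  have h2 : Finset.sort (insert k S') (· ≤ ·) = Finset.sort S' (· ≤ ·) ++ [k] :=
    sort_insert_max hlt
  have hlast : (Finset.sort (insert k S') (· ≤ ·)).getLastD 0 = k := by
    rw [h2]
    simp
  unfold chainProdP
  simp only [h1]
  rw [show (0 :: (Finset.sort (insert k S') (· ≤ ·) ++ [g]))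
      = (0 :: Finset.sort (insert k S') (· ≤ ·)) ++ [g] from rfl]
  rw [show ((0 :: Finset.sort (insert k S') (· ≤ ·)) ++ [g]).tail
      = Finset.sort (insert k S') (· ≤ ·) ++ [g] from rfl]
  rw [zip_tail_append, List.map_append, List.prod_append, hlast]
  simp [Ffac]

lemma max'_insert_of_subset {k : ℕ} {S' : Finset ℕ} (hS' : S' ⊆ Finset.Ioo 0 k) :
    (insert k S').max' ⟨k, Finset.mem_insert_self k S'⟩ = k := by
  refine le_antisymm (Finset.max'_le _ _ _ ?_) (Finset.le_max' _ _ (Finset.mem_insert_self k S'))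
  intro y hy
  rcases Finset.mem_insert.mp hy with rfl | hy
  · exact le_rfl
  · exact (Finset.mem_Ioo.mp (hS' hy)).2.le

lemma RchainP_rec (g : ℕ) (hg : 1 ≤ g) :
    RchainP g = ∑ k ∈ Finset.range g, RchainP k * Ffac k g := by
  have hg0 : g ≠ 0 := by omega
  rw [RchainP, if_neg hg0]
  -- split the RHS at k = 0
  have hrange : Finset.range g = insert 0 (Finset.Ico 1 g) := by
    rw [Finset.range_eq_Ico]
    ext x
    simp only [Finset.mem_Ico, Finset.mem_insert]
    omega
  rw [hrange, Finset.sum_insert (by simp)]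
  have hR0 : RchainP 0 = 1 := by simp [RchainP]
  rw [hR0, one_mul]
  -- split the LHS at S = ∅
  have hmem : (∅ : Finset ℕ) ∈ (Finset.Ioo 0 g).powerset := by simp
  rw [← Finset.insert_erase hmem, Finset.sum_insert (Finset.notMem_erase _ _),
    chainProdP_empty]
  congr 1
  -- rewrite the inner RchainP k as sums
  have hsum : ∑ k ∈ Finset.Ico 1 g, RchainP k * Ffac k g
      = ∑ k ∈ Finset.Ico 1 g, ∑ S' ∈ (Finset.Ioo 0 k).powerset,
          chainProdP k S' * Ffac k g := by
    refine Finset.sum_congr rfl fun k hk => ?_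
    have hk1 : k ≠ 0 := by
      rcases Finset.mem_Ico.mp hk with ⟨h1, _⟩; omega
    rw [RchainP, if_neg hk1, Finset.sum_mul]
  rw [hsum, Finset.sum_sigma']
  refine Finset.sum_bij'
    (fun S hS => (⟨S.max' (Finset.nonempty_of_ne_empty (Finset.ne_of_mem_erase hS)),
      S.erase (S.max' (Finset.nonempty_of_ne_empty (Finset.ne_of_mem_erase hS)))⟩ :
        (_ : ℕ) × Finset ℕ))
    (fun p hp => insert p.1 p.2) ?_ ?_ ?_ ?_ ?_
  · -- hi
    intro S hS
    have hne : S.Nonempty := Finset.nonempty_of_ne_empty (Finset.ne_of_mem_erase hS)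
    have hsub : S ⊆ Finset.Ioo 0 g :=
      Finset.mem_powerset.mp (Finset.mem_of_mem_erase hS)
    have hmS := Finset.mem_Ioo.mp (hsub (S.max'_mem hne))
    rw [Finset.mem_sigma]
    constructor
    · exact Finset.mem_Ico.mpr ⟨hmS.1, hmS.2⟩
    · rw [Finset.mem_powerset]
      intro b hb
      have hbS := Finset.mem_of_mem_erase hb
      have hb0 := (Finset.mem_Ioo.mp (hsub hbS)).1
      have hble := Finset.le_max' S b hbS
      have hbne := Finset.ne_of_mem_erase hb
      rw [Finset.mem_Ioo]
      exact ⟨hb0, lt_of_le_of_ne hble hbne⟩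
  · -- hj
    intro p hp
    rw [Finset.mem_sigma] at hp
    obtain ⟨hp1, hp2⟩ := hp
    rw [Finset.mem_Ico] at hp1
    rw [Finset.mem_powerset] at hp2
    refine Finset.mem_erase.mpr ⟨Finset.insert_ne_empty _ _, Finset.mem_powerset.mpr ?_⟩
    intro b hb
    rcases Finset.mem_insert.mp hb with rfl | hb
    · exact Finset.mem_Ioo.mpr ⟨hp1.1, hp1.2⟩
    · have h := Finset.mem_Ioo.mp (hp2 hb)
      exact Finset.mem_Ioo.mpr ⟨h.1, h.2.trans hp1.2⟩
  · -- left_inv : j (i S) = S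
    intro S hS
    exact Finset.insert_erase
      (S.max'_mem (Finset.nonempty_of_ne_empty (Finset.ne_of_mem_erase hS)))
  · -- right_inv : i (j p) = p
    intro p hp
    obtain ⟨k, S'⟩ := p
    simp only [Finset.mem_sigma, Finset.mem_powerset] at hp
    obtain ⟨hp1, hp2⟩ := hp
    have hknot : k ∉ S' := fun h => by
      have := (Finset.mem_Ioo.mp (hp2 h)).2; omega
    have hmax : (insert k S').max' ⟨k, Finset.mem_insert_self k S'⟩ = k :=
      max'_insert_of_subset hp2
    refine Sigma.ext hmax (heq_of_eq ?_)
    show (insert k S').erase ((insert k S').max' ⟨k, Finset.mem_insert_self k S'⟩) = S'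
    rw [hmax, Finset.erase_insert hknot]
  · -- h : values agree
    intro S hS
    have hne : S.Nonempty := Finset.nonempty_of_ne_empty (Finset.ne_of_mem_erase hS)
    have hsub : S ⊆ Finset.Ioo 0 g :=
      Finset.mem_powerset.mp (Finset.mem_of_mem_erase hS)
    set m := S.max' hne with hm
    have hmS := Finset.mem_Ioo.mp (hsub (S.max'_mem hne))
    have herase : S.erase m ⊆ Finset.Ioo 0 m := by
      intro b hb
      have hbS := Finset.mem_of_mem_erase hb
      have hb0 := (Finset.mem_Ioo.mp (hsub hbS)).1
      exact Finset.mem_Ioo.mpr ⟨hb0, lt_of_le_of_ne (Finset.le_max' S b hbS)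
        (Finset.ne_of_mem_erase hb)⟩
    rw [← chainProdP_insert hmS.1 hmS.2 herase, Finset.insert_erase (S.max'_mem hne)]

lemma pchoose_eval_zero {j k g : ℕ} (h2k : 2 * k ≤ j) (hj : j ≤ 2 * g) :
    (pchoose (Polynomial.X + 1 - 2 * (k : ℚ[X])) (2 * (g - k) + 1)).eval ((j : ℚ) - 1) = 0 := by
  have hkg : k ≤ g := by omega
  rw [pchoose, eval_mul, eval_prod]
  rw [Finset.prod_eq_zero (i := j - 2 * k) (Finset.mem_range.mpr (by omega))]
  · ring
  · have : ((j - 2 * k : ℕ) : ℚ) = (j : ℚ) - 2 * k := by push_cast [h2k]; ring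
    simp [this]

lemma Rchain_root (g : ℕ) (hg : 1 ≤ g) (j : ℕ) (hj : j ≤ 2 * g) :
    (RchainP g).eval ((j : ℚ) - 1) = 0 := by
  induction g using Nat.strong_induction_on generalizing j with
  | _ g ih =>
    rw [RchainP_rec g hg, eval_finset_sum]
    apply Finset.sum_eq_zero
    intro k hk
    rw [eval_mul]
    by_cases h2k : 2 * k ≤ j
    · rw [Ffac, eval_mul, pchoose_eval_zero h2k hj]
      ring
    · have hk1 : 1 ≤ k := by omega
      have hklt : k < g := Finset.mem_range.mp hk
      rw [ih k hklt hk1 j (by omega)]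
      ring

/-- Zagier's divisibility: for `g ≥ 1`, the polynomial
`R_g(X)` is divisible by `(X+1)X(X-1)⋯(X+1-2g) = Π_{j=0}^{2g} (X+1-j)`. -/
theorem Rg_divisible (g : ℕ) (hg : 1 ≤ g) :
    (∏ j ∈ Finset.range (2 * g + 1), (Polynomial.X + 1 - (j : ℚ[X]))) ∣
      RchainP g := by
  have hfac : ∀ j : ℕ, (Polynomial.X + 1 - (j : ℚ[X]))
      = Polynomial.X - Polynomial.C ((j : ℚ) - 1) := by
    intro j
    rw [map_sub, map_natCast, map_one]
    ring
  rw [Finset.prod_congr rfl fun j _ => hfac j]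
  apply Finset.prod_dvd_of_coprime
  · intro a ha b hb hab
    exact isCoprime_X_sub_C_of_isUnit_sub (by
      have h : (a : ℚ) - 1 - ((b : ℚ) - 1) ≠ 0 := by
        have : (a : ℚ) ≠ (b : ℚ) := by exact_mod_cast hab
        intro h'; apply this; linarith [sub_eq_zero.mp h']
      exact h.isUnit)
  · intro j hj
    exact Polynomial.dvd_iff_isRoot.mpr
      (Rchain_root g hg j (Nat.lt_succ_iff.mp (Finset.mem_range.mp hj)))
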